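/- Let A be a finite nilpotent group and let Γ be a group acting on A with kernel K such that |A| and |Γ/K| are coprime. Then [A,Γ] = [A,Γ,Γ]. -/

import Mathlib

open Subgroup

section Aux

variable {Γ : Type*} [Group Γ]

/-- An automorphism maps central elements to central elements. -/
lemma aux_center_map_mem {A : Type*} [Group A] (e : A ≃* A) {z : A}
    (hz : z ∈ Subgroup.center A) : e z ∈ Subgroup.center A := by
  rw [Subgroup.mem_center_iff] at hz ⊢
  intro g
  have h := hz (e.symm g)
  calc g * e z = e (e.symm g * z) := by rw [map_mul, e.apply_symm_apply]
    _ = e (z * e.symm g) := by rw [h]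
    _ = e z * g := by rw [map_mul, e.apply_symm_apply]

lemma aux_center_map_eq {A : Type*} [Group A] (e : A ≃* A) :
    (Subgroup.center A).map (e : A →* A) = Subgroup.center A := by
  apply le_antisymm
  · rintro x ⟨z, hz, rfl⟩
    exact aux_center_map_mem e hz
  · intro z hz
    exact ⟨e.symm z, aux_center_map_mem e.symm hz, e.apply_symm_apply z⟩

/-- The action of `Γ` restricted to the center. -/
def centerAction {A : Type*} [Group A] (φ : Γ →* MulAut A) :
    Γ →* MulAut ↥(Subgroup.center A) :=
  MonoidHom.mk'
    (fun g =>
      { toFun := fun z => ⟨φ g z, aux_center_map_mem (φ g) z.2⟩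
        invFun := fun z => ⟨(φ g).symm z, aux_center_map_mem (φ g).symm z.2⟩
        left_inv := fun z => by ext; simp
        right_inv := fun z => by ext; simp
        map_mul' := fun x y => by ext; simp })
    (fun g h => by ext z; simp [MulAut.mul_apply])

@[simp] lemma centerAction_coe {A : Type*} [Group A] (φ : Γ →* MulAut A) (g : Γ)
    (z : ↥(Subgroup.center A)) : (↑(centerAction φ g z) : A) = φ g ↑z := rfl

/-- The action of `Γ` on the quotient by the center. -/
def quotAction {A : Type*} [Group A] (φ : Γ →* MulAut A) :
    Γ →* MulAut (A ⧸ Subgroup.center A) :=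
  MonoidHom.mk'
    (fun g => QuotientGroup.congr (Subgroup.center A) (Subgroup.center A) (φ g)
        (aux_center_map_eq (φ g)))
    (fun g h => by
      ext q
      induction q using QuotientGroup.induction_on with
      | H a =>
        show ((φ (g * h) a : A) : A ⧸ Subgroup.center A) = ↑(φ g (φ h a))
        rw [map_mul φ, MulAut.mul_apply])

@[simp] lemma quotAction_mk {A : Type*} [Group A] (φ : Γ →* MulAut A) (g : Γ) (a : A) :
    quotAction φ g ↑a = (↑(φ g a) : A ⧸ Subgroup.center A) := rfl

/-- Key cocycle lemma: a cocycle with values in a finite abelian group of order coprime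
to the (relevant quotient of the) acting group is a coboundary. -/
lemma cocycle_split {Z : Type*} [CommGroup Z] [Finite Z] (ψ : Γ →* MulAut Z)
    (K : Subgroup Γ) [K.Normal] [Finite (Γ ⧸ K)] (hK : K ≤ ψ.ker)
    (hcop : Nat.Coprime (Nat.card Z) (Nat.card (Γ ⧸ K)))
    (ζ : Γ → Z) (hcoc : ∀ g h, ζ (g * h) = ζ g * ψ g (ζ h))
    (hKζ : ∀ k ∈ K, ζ k = 1) :
    ∃ y ∈ Subgroup.closure (Set.range ζ), ∀ h, ζ h * ψ h y = y := by
  by_cases hZ1 : Nat.card Z = 1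
  · haveI : Subsingleton Z := (Nat.card_eq_one_iff_unique.mp hZ1).1
    exact ⟨1, one_mem _, fun h => Subsingleton.elim _ _⟩
  have hZpos : 0 < Nat.card Z := Nat.card_pos
  have hZ2 : 1 < Nat.card Z := lt_of_le_of_ne hZpos (fun h => hZ1 h.symm)
  haveI := Fintype.ofFinite (Γ ⧸ K)
  set n := Nat.card (Γ ⧸ K) with hn
  -- the well-defined function on the quotient
  have hwd : ∀ g₁ g₂ : Γ, QuotientGroup.leftRel K g₁ g₂ → ζ g₁ = ζ g₂ := by
    intro g₁ g₂ h
    rw [QuotientGroup.leftRel_apply] at h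
    have : g₂ = g₁ * (g₁⁻¹ * g₂) := by group
    rw [this, hcoc, hKζ _ h, map_one, mul_one]
  set F : Γ ⧸ K → Z := fun q => Quotient.liftOn' q ζ hwd with hF
  have hFmk : ∀ g : Γ, F (g : Γ ⧸ K) = ζ g := fun g => rfl
  have hFmul : ∀ (h : Γ) (q : Γ ⧸ K), F ((h : Γ ⧸ K) * q) = ζ h * ψ h (F q) := by
    intro h q
    induction q using Quotient.inductionOn' with
    | h g =>
      have : (h : Γ ⧸ K) * Quotient.mk'' g = ((h * g : Γ) : Γ ⧸ K) := rfl
      rw [this]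
      exact hcoc h g
  have hbmem : (∏ q : Γ ⧸ K, F q) ∈ Subgroup.closure (Set.range ζ) := by
    apply Subgroup.prod_mem
    intro q _
    induction q using Quotient.inductionOn' with
    | h g => exact Subgroup.subset_closure ⟨g, rfl⟩
  have key : ∀ h : Γ, (∏ q : Γ ⧸ K, F q) = ζ h ^ n * ψ h (∏ q : Γ ⧸ K, F q) := by
    intro h
    calc (∏ q : Γ ⧸ K, F q) = ∏ q : Γ ⧸ K, F ((h : Γ ⧸ K) * q) :=
          (Equiv.prod_comp (Equiv.mulLeft (h : Γ ⧸ K)) F).symm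
      _ = ∏ q : Γ ⧸ K, (ζ h * ψ h (F q)) :=
          Finset.prod_congr rfl (fun q _ => hFmul h q)
      _ = (∏ _q : Γ ⧸ K, ζ h) * ∏ q : Γ ⧸ K, ψ h (F q) := Finset.prod_mul_distrib
      _ = ζ h ^ n * ψ h (∏ q : Γ ⧸ K, F q) := by
          rw [Finset.prod_const, Finset.card_univ, ← Nat.card_eq_fintype_card,
            ← map_prod (ψ h) F]
  obtain ⟨m, -, hm⟩ := Nat.exists_mul_mod_eq_one_of_coprime hcop.symm hZ2
  refine ⟨(∏ q : Γ ⧸ K, F q) ^ m, pow_mem hbmem m, fun h => ?_⟩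
  have hpow : ζ h ^ (n * m) = ζ h := by
    have hdm : n * m = Nat.card Z * (n * m / Nat.card Z) + 1 := by
      conv_lhs => rw [← Nat.div_add_mod (n * m) (Nat.card Z)]
      rw [hm]
    rw [hdm, pow_add, pow_mul, pow_card_eq_one', one_pow, one_mul, pow_one]
  have hψb : ψ h (∏ q : Γ ⧸ K, F q) = (ζ h ^ n)⁻¹ * (∏ q : Γ ⧸ K, F q) := by
    conv_rhs => rw [key h]
    group
  rw [map_pow, hψb, mul_pow, inv_pow, ← pow_mul, ← mul_assoc, hpow]
  group

/-- Decomposition of a finite abelian group with coprime action into fixed part times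
commutators. -/
lemma abelian_split {Z : Type*} [CommGroup Z] [Finite Z] (ψ : Γ →* MulAut Z)
    (K : Subgroup Γ) [K.Normal] [Finite (Γ ⧸ K)] (hK : K ≤ ψ.ker)
    (hcop : Nat.Coprime (Nat.card Z) (Nat.card (Γ ⧸ K))) (z : Z) :
    ∃ c m, (∀ g, ψ g c = c) ∧
      m ∈ Subgroup.closure {x : Z | ∃ w : Z, ∃ g : Γ, x = w⁻¹ * ψ g w} ∧ z = c * m := by
  set ζ : Γ → Z := fun g => z⁻¹ * ψ g z with hζ
  have hcoc : ∀ g h, ζ (g * h) = ζ g * ψ g (ζ h) := by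
    intro g h
    simp only [hζ, map_mul, map_inv, MulAut.mul_apply]
    group
  have hKζ : ∀ k ∈ K, ζ k = 1 := by
    intro k hk
    have : ψ k = 1 := hK hk
    simp [hζ, this]
  obtain ⟨y, hy_mem, hy⟩ := cocycle_split ψ K hK hcop ζ hcoc hKζ
  have hy_mem' : y ∈ Subgroup.closure {x : Z | ∃ w : Z, ∃ g : Γ, x = w⁻¹ * ψ g w} := by
    refine Subgroup.closure_mono ?_ hy_mem
    rintro x ⟨g, rfl⟩
    exact ⟨z, g, rfl⟩
  refine ⟨z * y, y⁻¹, ?_, inv_mem hy_mem', by group⟩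
  intro g
  have := hy g
  calc ψ g (z * y) = ψ g z * ψ g y := map_mul _ _ _
    _ = z * (ζ g * ψ g y) := by simp only [hζ]; group
    _ = z * y := by rw [hy g]

open scoped IsMulCommutative in
/-- Main decomposition: for a coprime action on a finite nilpotent group, every element
is a product of a fixed element and an element of `[A,Γ]`. -/
lemma main_split_forall (K : Subgroup Γ) [K.Normal] [Finite (Γ ⧸ K)]
    (A : Type*) [Group A] [Group.IsNilpotent A] :
    ∀ [Finite A] (φ : Γ →* MulAut A), K ≤ φ.ker →
      Nat.Coprime (Nat.card A) (Nat.card (Γ ⧸ K)) → ∀ a : A,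
      ∃ c m, (∀ g, φ g c = c) ∧
        m ∈ Subgroup.closure {x : A | ∃ b : A, ∃ g : Γ, x = b⁻¹ * φ g b} ∧ a = c * m := by
  refine nilpotent_center_quotient_ind
    (P := fun G _ _ => ∀ [Finite G] (φ : Γ →* MulAut G), K ≤ φ.ker →
      Nat.Coprime (Nat.card G) (Nat.card (Γ ⧸ K)) → ∀ a : G,
      ∃ c m, (∀ g, φ g c = c) ∧
        m ∈ Subgroup.closure {x : G | ∃ b : G, ∃ g : Γ, x = b⁻¹ * φ g b} ∧ a = c * m)
    A ?_ ?_
  · intro G _ _ _ φ _ _ a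
    exact ⟨1, 1, fun g => map_one _, one_mem _, Subsingleton.elim _ _⟩
  · intro G _ _ ih _ φ hK hcop a
    set Z := Subgroup.center G with hZ
    set φ' := quotAction φ with hφ'
    set ψ := centerAction φ with hψ
    have hK' : K ≤ φ'.ker := by
      intro k hk
      have hk1 : φ k = 1 := hK hk
      rw [MonoidHom.mem_ker]
      ext q
      induction q using QuotientGroup.induction_on with
      | H x =>
        show φ' k ↑x = ↑x
        rw [hφ', quotAction_mk, hk1]
        rfl
    have hKψ : K ≤ ψ.ker := by
      intro k hk
      have hk1 : φ k = 1 := hK hk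
      rw [MonoidHom.mem_ker]
      ext z
      show (↑(ψ k z) : G) = ↑z
      rw [hψ, centerAction_coe, hk1]
      rfl
    have hcopQ : Nat.Coprime (Nat.card (G ⧸ Z)) (Nat.card (Γ ⧸ K)) :=
      hcop.coprime_dvd_left (Subgroup.card_quotient_dvd_card Z)
    have hcopZ : Nat.Coprime (Nat.card ↥Z) (Nat.card (Γ ⧸ K)) :=
      hcop.coprime_dvd_left (Subgroup.card_subgroup_dvd_card Z)
    obtain ⟨cq, mq, hcq, hmq, heq⟩ := ih φ' hK' hcopQ (↑a)
    have hcl : Subgroup.closure {x : G ⧸ Z | ∃ b : G ⧸ Z, ∃ g : Γ, x = b⁻¹ * φ' g b}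
        = (Subgroup.closure {x : G | ∃ b : G, ∃ g : Γ, x = b⁻¹ * φ g b}).map
            (QuotientGroup.mk' Z) := by
      rw [MonoidHom.map_closure]
      congr 1
      ext x
      constructor
      · rintro ⟨bq, g, rfl⟩
        obtain ⟨b, rfl⟩ := QuotientGroup.mk'_surjective Z bq
        exact ⟨b⁻¹ * φ g b, ⟨b, g, rfl⟩, by
          rw [map_mul, map_inv]
          rfl⟩
      · rintro ⟨y, ⟨b, g, rfl⟩, rfl⟩
        refine ⟨↑b, g, ?_⟩
        rw [map_mul, map_inv]
        rfl
    rw [hcl] at hmq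
    obtain ⟨m, hm, hmk⟩ := Subgroup.mem_map.mp hmq
    obtain ⟨a', ha'⟩ : ∃ x : G, x = a * m⁻¹ := ⟨_, rfl⟩
    have ha'mk : ((a' : G) : G ⧸ Z) = cq := by
      have hmm : ((m : G) : G ⧸ Z) = mq := hmk
      have : ((a' : G) : G ⧸ Z) = (↑a : G ⧸ Z) * (↑m : G ⧸ Z)⁻¹ := by
        rw [ha']
        push_cast
        rfl
      rw [this, hmm, heq]
      group
    have hcent : ∀ g : Γ, a'⁻¹ * φ g a' ∈ Z := by
      intro g
      have h1 : ((a' : G) : G ⧸ Z) = ↑(φ g a') := by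
        have h2 : (↑(φ g a') : G ⧸ Z) = φ' g ↑a' := (quotAction_mk φ g a').symm
        rw [h2, ha'mk, hcq g, ← ha'mk]
      exact QuotientGroup.eq.mp h1
    set ζ : Γ → ↥Z := fun g => ⟨a'⁻¹ * φ g a', hcent g⟩ with hζ
    have hcoc : ∀ g h, ζ (g * h) = ζ g * ψ g (ζ h) := by
      intro g h
      apply Subtype.ext
      have hrhs : (↑(ζ g * ψ g (ζ h)) : G)
          = (a'⁻¹ * φ g a') * φ g (a'⁻¹ * φ h a') := by
        rw [Subgroup.coe_mul, hψ, centerAction_coe]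
      rw [hrhs]
      show a'⁻¹ * φ (g * h) a' = _
      rw [map_mul φ, MulAut.mul_apply, map_mul (φ g), map_inv]
      group
    have hKζ : ∀ k ∈ K, ζ k = 1 := by
      intro k hk
      have hk1 : φ k = 1 := hK hk
      apply Subtype.ext
      show a'⁻¹ * φ k a' = 1
      rw [hk1]
      simp
    obtain ⟨y, -, hy⟩ := cocycle_split ψ K hKψ hcopZ ζ hcoc hKζ
    obtain ⟨c₂, m₂, hc₂, hm₂, hyinv⟩ := abelian_split ψ K hKψ hcopZ y⁻¹
    have hm₂A : (↑m₂ : G) ∈ Subgroup.closure {x : G | ∃ b : G, ∃ g : Γ, x = b⁻¹ * φ g b} := by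
      refine Subgroup.closure_induction ?_ ?_ ?_ ?_ hm₂
      · rintro x ⟨w, g, rfl⟩
        refine Subgroup.subset_closure ⟨(↑w : G), g, ?_⟩
        rw [Subgroup.coe_mul, Subgroup.coe_inv, hψ, centerAction_coe]
      · simpa using one_mem _
      · intro x y hx hy ihx ihy
        rw [Subgroup.coe_mul]
        exact mul_mem ihx ihy
      · intro x hx ihx
        rw [Subgroup.coe_inv]
        exact inv_mem ihx
    refine ⟨a' * ↑y * ↑c₂, ↑m₂ * m, ?_, mul_mem hm₂A hm, ?_⟩
    · intro g
      have e1 : φ g a' = a' * ↑(ζ g) := by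
        show φ g a' = a' * (a'⁻¹ * φ g a')
        group
      have e2 : φ g (↑y : G) = ↑(ψ g y) := by rw [hψ, centerAction_coe]
      have e3 : φ g (↑c₂ : G) = ↑c₂ := by
        have : φ g (↑c₂ : G) = ↑(ψ g c₂) := by rw [hψ, centerAction_coe]
        rw [this, hc₂ g]
      have e4 : (↑(ζ g) : G) * ↑(ψ g y) = ↑y := by rw [← Subgroup.coe_mul, hy g]
      calc φ g (a' * ↑y * ↑c₂) = φ g a' * φ g (↑y : G) * φ g (↑c₂ : G) := by
            rw [map_mul, map_mul]
        _ = a' * ↑(ζ g) * ↑(ψ g y) * ↑c₂ := by rw [e1, e2, e3]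
        _ = a' * (↑(ζ g) * ↑(ψ g y)) * ↑c₂ := by group
        _ = a' * ↑y * ↑c₂ := by rw [e4]
    · have h5 : (y : ↥Z) * (c₂ * m₂) = 1 := by
        rw [← hyinv]
        group
      have h6 : (↑y : G) * (↑c₂ * ↑m₂) = 1 := by
        rw [← Subgroup.coe_mul, ← Subgroup.coe_mul, h5, Subgroup.coe_one]
      calc a = a' * m := by rw [ha']; group
        _ = a' * (↑y * (↑c₂ * ↑m₂)) * m := by rw [h6]; group
        _ = a' * ↑y * ↑c₂ * (↑m₂ * m) := by group

/-- Restatement of the main decomposition. -/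
lemma main_split {A : Type*} [Group A] [Group.IsNilpotent A] [Finite A]
    (K : Subgroup Γ) [K.Normal] [Finite (Γ ⧸ K)] (φ : Γ →* MulAut A)
    (hK : K ≤ φ.ker) (hcop : Nat.Coprime (Nat.card A) (Nat.card (Γ ⧸ K))) (a : A) :
    ∃ c m, (∀ g, φ g c = c) ∧
      m ∈ Subgroup.closure {x : A | ∃ b : A, ∃ g : Γ, x = b⁻¹ * φ g b} ∧ a = c * m :=
  main_split_forall K A φ hK hcop a

end Aux

/-- Let `A` be a finite nilpotent group and `Γ` act on `A` with kernel `K`, with `|A|`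
and `|Γ/K|` coprime.  Then `[A,Γ] = [A,Γ,Γ]`, where `[A,Γ] = ⟨a⁻¹·(g·a)⟩` and
`[A,Γ,Γ] = [[A,Γ],Γ]`. -/
theorem stmt_11 {A Γ : Type*} [Group A] [Finite A] [Group.IsNilpotent A] [Group Γ]
    (φ : Γ →* MulAut A)
    (hcop : Nat.Coprime (Nat.card A) (Nat.card (Γ ⧸ φ.ker))) :
    Subgroup.closure {x : A | ∃ a : A, ∃ g : Γ, x = a⁻¹ * φ g a} =
      Subgroup.closure {x : A |
        ∃ b ∈ Subgroup.closure {x : A | ∃ a : A, ∃ g : Γ, x = a⁻¹ * φ g a},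
          ∃ g : Γ, x = b⁻¹ * φ g b} := by
  haveI : Finite (MulAut A) :=
    Finite.of_injective (fun e => (e : A → A)) DFunLike.coe_injective
  haveI : Finite (Γ ⧸ φ.ker) :=
    Finite.of_equiv _ (QuotientGroup.quotientKerEquivRange φ).symm.toEquiv
  set S : Set A := {x : A | ∃ a : A, ∃ g : Γ, x = a⁻¹ * φ g a} with hS
  have hstable : ∀ g : Γ, ∀ b ∈ Subgroup.closure S, φ g b ∈ Subgroup.closure S := by
    intro g b hb
    induction hb using Subgroup.closure_induction with
    | mem x hx =>
      obtain ⟨a, h, rfl⟩ := hx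
      apply Subgroup.subset_closure
      refine ⟨φ g a, g * h * g⁻¹, ?_⟩
      have harg : g * h * g⁻¹ * g = g * h := by group
      have h2 : φ (g * h * g⁻¹) (φ g a) = φ g (φ h a) := by
        rw [← MulAut.mul_apply, ← map_mul, harg, map_mul, MulAut.mul_apply]
      rw [h2, map_mul, map_inv]
    | one => simpa using one_mem _
    | mul x y hx hy ihx ihy => rw [map_mul]; exact mul_mem ihx ihy
    | inv x hx ihx => rw [map_inv]; exact inv_mem ihx
  apply le_antisymm
  · rw [Subgroup.closure_le]
    rintro x ⟨a, g, rfl⟩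
    obtain ⟨c, m, hc, hm, rfl⟩ := main_split φ.ker φ le_rfl hcop a
    have : (c * m)⁻¹ * φ g (c * m) = m⁻¹ * φ g m := by
      rw [map_mul, hc g]; group
    rw [SetLike.mem_coe, this]
    exact Subgroup.subset_closure ⟨m, hm, g, rfl⟩
  · rw [Subgroup.closure_le]
    rintro x ⟨b, hb, g, rfl⟩
    exact mul_mem (inv_mem hb) (hstable g b hb)
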